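/- Let K be a graded Hopf algebra over a commutative ring k and let P = Ker(Δ̄) denote its primitive elements. Then the canonical map K ⊗ TC(sP) ⊗ K → B(K;K;K) is a morphism of graded coalgebras, where the left-hand side carries the coalgebra structure obtained by tensorization. -/

import Mathlib

/-!
STATEMENT 9.  Let `K` be a graded Hopf algebra over `k`, with primitives
`P = Ker Δ̄`.  The canonical map `K ⊗ TC(sP) ⊗ K → B(K;K;K)` is a morphism of
graded coalgebras, where the left-hand side carries the coalgebra structure
obtained by tensorization (diagonal of `K` on the outer factors,
deconcatenation on `TC(sP)`, with Koszul signs), and the bar resolution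
carries the Alexander–Whitney diagonal `AW ∘ B(Δ;Δ;Δ)` (with the ζ-signs).

We model `K` as the free module on a pointed graded basis `S` (with unit
basis element `e`, `deg e = 0`, counit `ε(single s) = δ_{s,e}`), with product
and coproduct structure constants `mul`, `diag`.  The bar resolution is the
free module on generators `(a, [s₁|…|s_r], b)`, `a, b ∈ S`, `sᵢ ∈ S \ {e}`
(a basis of `K̄`).  Primitive elements are those `x` with
`Δx = x ⊗ 1 + 1 ⊗ x`.
-/

def sgn (m : ℤ) : ℤ := if Even m then 1 else -1

variable (k : Type*) [CommRing k] {S : Type*} [DecidableEq S]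
  (deg : S → ℤ) (e : S) (mul : S → S → (S →₀ k)) (diag : S → ((S × S) →₀ k))

/-- Product of two elements of `K`. -/
noncomputable def mulK (f g : S →₀ k) : S →₀ k :=
  f.sum fun s c => g.sum fun t c' => (c * c') • mul s t

/-- Product of a list of basis elements. -/
noncomputable def listProdK : List S → (S →₀ k)
  | [] => Finsupp.single e 1
  | s :: l => mulK k mul (Finsupp.single s 1) (listProdK l)

/-- `x ⊗ y ∈ K ⊗ K`. -/
noncomputable def pairT (f g : S →₀ k) : (S × S) →₀ k :=
  f.sum fun s c => g.sum fun t c' => (c * c') • Finsupp.single (s, t) 1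

/-- The coproduct of `K`. -/
noncomputable def diagK (f : S →₀ k) : (S × S) →₀ k := f.sum fun s c => c • diag s

/-- `x` is primitive: `Δx = x ⊗ 1 + 1 ⊗ x`. -/
def IsPrimitive (x : S →₀ k) : Prop :=
  diagK k diag x = pairT k x (Finsupp.single e 1) + pairT k (Finsupp.single e 1) x

/-- `x` is homogeneous of degree `d`. -/
def IsHomog (d : ℤ) (x : S →₀ k) : Prop := ∀ s ∈ x.support, deg s = d

/-- Basis of `K̄ = ker ε`. -/
abbrev SBar (e : S) := {s : S // s ≠ e}

/-- Basis of the bar resolution `K ⊗ T(sK̄) ⊗ K`. -/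
abbrev BarGen (e : S) := S × List (SBar e) × S

/-- Turn a list of non-unit basis elements into middle slots. -/
def toBarL (l : List S) : List (SBar e) :=
  l.filterMap fun s => if h : s = e then none else some ⟨s, h⟩

/-- Expand a list of elements of `K` into a combination of basis lists. -/
noncomputable def expandL : List (S →₀ k) → (List S →₀ k)
  | [] => Finsupp.single [] 1
  | f :: L => f.sum fun s c => c • (expandL L).mapDomain (s :: ·)

/-- The canonical map `K ⊗ TC(sP) ⊗ K → B(K;K;K)` on a generator
`a ⊗ [p₁|…|pₙ] ⊗ b` (the `pᵢ` will be primitive, hence supported away from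
the unit). -/
noncomputable def jMap (a : S) (ps : List (S →₀ k)) (b : S) : BarGen e →₀ k :=
  (expandL k ps).sum fun l c =>
    if ∀ s ∈ l, s ≠ e then c • Finsupp.single (a, toBarL e l, b) 1 else 0

/-- Choose a component of the coproduct in every middle slot. -/
noncomputable def chooseAll : List (SBar e) → (List (S × S) →₀ k)
  | [] => Finsupp.single [] 1
  | s :: L => (diag s.1).sum fun p c => c • (chooseAll L).mapDomain (p :: ·)

/-- The ζ-sign of the Alexander–Whitney diagonal of the bar resolution. -/
def zeta (q m : ℤ) (adegs bdegs : List ℤ) (i : ℕ) : ℤ :=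
  let r := adegs.length
  (∑ j ∈ Finset.range r, (q + ((bdegs.take j).sum)) * adegs.getD j 0)
  + (q + bdegs.sum) * m
  + (∑ j ∈ Finset.range r, if i ≤ j then (j + 1 - i : ℤ) * adegs.getD j 0 else 0)
  + (r - i : ℤ) * m + (i : ℤ) * q
  + (∑ j ∈ Finset.range r, if j + 1 < i then ((i : ℤ) - (j + 1)) * bdegs.getD j 0 else 0)

/-- The Alexander–Whitney diagonal `AW ∘ B(Δ;Δ;Δ)` of the bar resolution, on
a generator. -/
noncomputable def diagBar (g : BarGen e) : (BarGen e × BarGen e) →₀ k :=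
  match g with
  | (a, L, b) =>
    (diag a).sum fun pa ca =>
    (diag b).sum fun pb cb =>
    (chooseAll k e diag L).sum fun cl cc =>
      ∑ i ∈ Finset.range (L.length + 1),
        (if (∀ s ∈ (cl.take i).map Prod.fst, s ≠ e) ∧
            (∀ s ∈ (cl.drop i).map Prod.snd, s ≠ e) then
          (sgn (zeta (deg pa.2) (deg pb.1) (cl.map fun p => deg p.1)
              (cl.map fun p => deg p.2) i) * (ca * cb * cc)) •
            ((mulK k mul (listProdK k e mul ((cl.drop i).map Prod.fst))
                (Finsupp.single pb.1 1)).sum fun sL cL =>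
              (mulK k mul (Finsupp.single pa.2 1)
                  (listProdK k e mul ((cl.take i).map Prod.snd))).sum fun sR cR =>
                (cL * cR) •
                  Finsupp.single ((pa.1, toBarL e ((cl.take i).map Prod.fst), sL),
                    (sR, toBarL e ((cl.drop i).map Prod.snd), pb.2)) 1)
        else 0)

/-- `(j ⊗ j)` of an exterior tensor of two combinations of bar generators. -/
noncomputable def pairBar (f g : BarGen e →₀ k) : (BarGen e × BarGen e) →₀ k :=
  f.sum fun u c => g.sum fun v c' => (c * c') • Finsupp.single (u, v) 1

/-- The tensorized diagonal of `K ⊗ TC(sP) ⊗ K` followed by `j ⊗ j`, on a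
generator `a ⊗ [p₁|…|pₙ] ⊗ b` whose middle entries have degrees `ds`. -/
noncomputable def diagTens (a : S) (ps : List (ℤ × (S →₀ k))) (b : S) :
    (BarGen e × BarGen e) →₀ k :=
  (diag a).sum fun pa ca =>
  (diag b).sum fun pb cb =>
    ∑ i ∈ Finset.range (ps.length + 1),
      (sgn (deg pa.2 * ((ps.take i).map fun p => p.1 + 1).sum
          + (((ps.drop i).map fun p => p.1 + 1).sum) * deg pb.1
          + deg pa.2 * deg pb.1) * (ca * cb)) •
        pairBar k e (jMap k e (pa.1 : S) ((ps.take i).map Prod.snd) pb.1)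
          (jMap k e pa.2 ((ps.drop i).map Prod.snd) pb.2)

/-! ### Auxiliary machinery: `bsum` -/

section bsumAPI
variable {α β M : Type*} [AddCommMonoid M] [Module k M]

/-- Sum of a finsupp against a function, `bsum F Φ = ∑ c_x • Φ x`. -/
noncomputable def bsum (F : α →₀ k) (Φ : α → M) : M := F.sum fun x c => c • Φ x

variable {k}
variable {F G : α →₀ k} {Φ Φ' : α → M}

lemma bsum_zero : bsum k (0 : α →₀ k) Φ = 0 := Finsupp.sum_zero_index

lemma bsum_single (x : α) (c : k) : bsum k (Finsupp.single x c) Φ = c • Φ x :=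
  Finsupp.sum_single_index (zero_smul _ _)

lemma bsum_add : bsum k (F + G) Φ = bsum k F Φ + bsum k G Φ :=
  Finsupp.sum_add_index' (fun _ => zero_smul _ _) (fun _ b1 b2 => add_smul b1 b2 _)

lemma bsum_smul (c : k) : bsum k (c • F) Φ = c • bsum k F Φ := by
  rw [bsum, Finsupp.sum_smul_index' (h := fun x d => d • Φ x) (fun i => zero_smul _ _), bsum,
    Finsupp.smul_sum]
  exact Finsupp.sum_congr fun x _ => by rw [smul_eq_mul, mul_smul]

lemma bsum_finsuppSum (H : β →₀ k) (g : β → k → (α →₀ k)) :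
    bsum k (H.sum g) Φ = H.sum fun s c => bsum k (g s c) Φ :=
  Finsupp.sum_sum_index (fun _ => zero_smul _ _) (fun _ b1 b2 => add_smul b1 b2 _)

lemma bsum_mapDomain (f : α → β) (F : α →₀ k) (Φ : β → M) :
    bsum k (F.mapDomain f) Φ = bsum k F (fun x => Φ (f x)) :=
  Finsupp.sum_mapDomain_index (fun _ => zero_smul _ _) (fun _ b1 b2 => add_smul b1 b2 _)

lemma bsum_congr (h : ∀ x ∈ F.support, Φ x = Φ' x) : bsum k F Φ = bsum k F Φ' :=
  Finset.sum_congr rfl fun x hx => by simp only [h x hx]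

lemma bsum_smul_fun (c : k) : bsum k F (fun x => c • Φ x) = c • bsum k F Φ := by
  rw [bsum, bsum, Finsupp.smul_sum]
  exact Finsupp.sum_congr fun x _ => smul_comm _ _ _

lemma bsum_sum {ι : Type*} (s : Finset ι) (Ψ : ι → α → M) :
    bsum k F (fun x => ∑ i ∈ s, Ψ i x) = ∑ i ∈ s, bsum k F (Ψ i) := by
  simp only [bsum, Finsupp.sum, Finset.smul_sum]
  exact Finset.sum_comm

lemma bsum_comm (G : β →₀ k) (h : α → β → M) :
    bsum k F (fun x => bsum k G (h x)) = bsum k G (fun y => bsum k F (fun x => h x y)) := by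
  simp only [bsum, Finsupp.sum, Finset.smul_sum, smul_smul]
  rw [Finset.sum_comm]
  exact Finset.sum_congr rfl fun y _ => Finset.sum_congr rfl fun x _ => by rw [mul_comm]

lemma bsum_zero_fun : bsum k F (fun _ => (0 : M)) = 0 := by simp [bsum]

lemma bsum_bsum (F : α →₀ k) (Φ₁ : α → (β →₀ k)) {N : Type*} [AddCommMonoid N] [Module k N]
    (H : β → N) : bsum k (bsum k F Φ₁) H = bsum k F (fun x => bsum k (Φ₁ x) H) := by
  rw [show bsum k F Φ₁ = F.sum fun x c => c • Φ₁ x from rfl, bsum_finsuppSum]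
  exact Finsupp.sum_congr fun x _ => bsum_smul _

end bsumAPI

section bsumAPI2
variable {α M : Type*} [AddCommMonoid M] [Module k M] {k}
lemma bsum_eq_zero {F : α →₀ k} {Φ : α → M} (h : ∀ x, Φ x = 0) : bsum k F Φ = 0 := by
  simp [bsum, h]
end bsumAPI2
set_option linter.unusedSectionVars false

/-! ### Structural `bsum` computations for the definitions -/

/-- Expand a list of elements of `K ⊗ K` into a combination of basis lists. -/
noncomputable def expandP : List ((S × S) →₀ k) → (List (S × S) →₀ k)
  | [] => Finsupp.single [] 1
  | f :: L => f.sum fun p c => c • (expandP L).mapDomain (p :: ·)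

section structural
variable {M : Type*} [AddCommMonoid M] [Module k M]
variable {k}

lemma bsum_expandL_nil (Φ : List S → M) : bsum k (expandL k ([] : List (S →₀ k))) Φ = Φ [] := by
  rw [show expandL k ([] : List (S →₀ k)) = Finsupp.single [] 1 from rfl, bsum_single, one_smul]

lemma bsum_expandL_cons (p : S →₀ k) (ps : List (S →₀ k)) (Φ : List S → M) :
    bsum k (expandL k (p :: ps)) Φ
      = bsum k p (fun s => bsum k (expandL k ps) (fun l => Φ (s :: l))) := by
  rw [show expandL k (p :: ps) = p.sum fun s c => c • (expandL k ps).mapDomain (s :: ·) from rfl,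
    bsum_finsuppSum]
  exact Finsupp.sum_congr fun s _ => by rw [bsum_smul, bsum_mapDomain]

lemma bsum_expandP_nil (Φ : List (S × S) → M) :
    bsum k (expandP k ([] : List ((S × S) →₀ k))) Φ = Φ [] := by
  rw [show expandP k ([] : List ((S × S) →₀ k)) = Finsupp.single [] 1 from rfl, bsum_single,
    one_smul]

lemma bsum_expandP_cons (p : (S × S) →₀ k) (ps : List ((S × S) →₀ k)) (Φ : List (S × S) → M) :
    bsum k (expandP k (p :: ps)) Φ
      = bsum k p (fun s => bsum k (expandP k ps) (fun l => Φ (s :: l))) := by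
  rw [show expandP k (p :: ps) = p.sum fun s c => c • (expandP k ps).mapDomain (s :: ·) from rfl,
    bsum_finsuppSum]
  exact Finsupp.sum_congr fun s _ => by rw [bsum_smul, bsum_mapDomain]

lemma bsum_chooseAll_nil (Φ : List (S × S) → M) :
    bsum k (chooseAll k e diag ([] : List (SBar e))) Φ = Φ [] := by
  rw [show chooseAll k e diag ([] : List (SBar e)) = Finsupp.single [] 1 from rfl, bsum_single,
    one_smul]

lemma bsum_chooseAll_cons (x : SBar e) (L : List (SBar e)) (Φ : List (S × S) → M) :
    bsum k (chooseAll k e diag (x :: L)) Φ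
      = bsum k (diag x.1) (fun pr => bsum k (chooseAll k e diag L) (fun l => Φ (pr :: l))) := by
  rw [show chooseAll k e diag (x :: L)
      = (diag x.1).sum fun p c => c • (chooseAll k e diag L).mapDomain (p :: ·) from rfl,
    bsum_finsuppSum]
  exact Finsupp.sum_congr fun s _ => by rw [bsum_smul, bsum_mapDomain]

lemma bsum_pairT (f g : S →₀ k) (Φ : (S × S) → M) :
    bsum k (pairT k f g) Φ = bsum k f (fun s => bsum k g (fun t => Φ (s, t))) := by
  rw [show pairT k f g = f.sum fun s c => g.sum fun t c' => (c * c') • Finsupp.single (s, t) 1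
      from rfl, bsum_finsuppSum]
  refine Finsupp.sum_congr fun s _ => ?_
  rw [bsum_finsuppSum, ← bsum_smul_fun]
  refine Finsupp.sum_congr fun t _ => ?_
  rw [bsum_smul, bsum_single, one_smul, smul_smul, mul_comm]

lemma bsum_diagK (f : S →₀ k) (Φ : (S × S) → M) :
    bsum k (diagK k diag f) Φ = bsum k f (fun s => bsum k (diag s) Φ) := by
  rw [show diagK k diag f = f.sum fun s c => c • diag s from rfl, bsum_finsuppSum]
  exact Finsupp.sum_congr fun s _ => by rw [bsum_smul]

lemma bsum_mulK (f g : S →₀ k) (Φ : S → M) :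
    bsum k (mulK k mul f g) Φ
      = bsum k f (fun s => bsum k g (fun t => bsum k (mul s t) Φ)) := by
  rw [show mulK k mul f g = f.sum fun s c => g.sum fun t c' => (c * c') • mul s t from rfl,
    bsum_finsuppSum]
  refine Finsupp.sum_congr fun s _ => ?_
  rw [bsum_finsuppSum, ← bsum_smul_fun]
  refine Finsupp.sum_congr fun t _ => ?_
  rw [bsum_smul, smul_smul, mul_comm]

lemma bsum_jMap (a : S) (ps : List (S →₀ k)) (b : S) (Φ : BarGen e → M) :
    bsum k (jMap k e a ps b) Φ
      = bsum k (expandL k ps)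
          (fun l => if ∀ s ∈ l, s ≠ e then Φ (a, toBarL e l, b) else 0) := by
  rw [show jMap k e a ps b = (expandL k ps).sum fun l c =>
      if ∀ s ∈ l, s ≠ e then c • Finsupp.single (a, toBarL e l, b) 1 else 0 from rfl,
    bsum_finsuppSum]
  refine Finsupp.sum_congr fun l _ => ?_
  by_cases h : ∀ s ∈ l, s ≠ e
  · show _ = (expandL k ps) l • (if ∀ s ∈ l, s ≠ e then Φ (a, toBarL e l, b) else 0)
    rw [if_pos h, bsum_smul, bsum_single, one_smul, if_pos h]
  · show _ = (expandL k ps) l • (if ∀ s ∈ l, s ≠ e then Φ (a, toBarL e l, b) else 0)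
    rw [if_neg h, bsum_zero, if_neg h, smul_zero]

lemma bsum_pairBar (f g : BarGen e →₀ k) (Φ : BarGen e × BarGen e → M) :
    bsum k (pairBar k e f g) Φ = bsum k f (fun u => bsum k g (fun v => Φ (u, v))) := by
  rw [show pairBar k e f g = f.sum fun u c => g.sum fun v c' => (c * c') • Finsupp.single (u, v) 1
      from rfl, bsum_finsuppSum]
  refine Finsupp.sum_congr fun u _ => ?_
  rw [bsum_finsuppSum, ← bsum_smul_fun]
  refine Finsupp.sum_congr fun v _ => ?_
  rw [bsum_smul, bsum_single, one_smul, smul_smul, mul_comm]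

end structural
section basicfacts
variable {M : Type*} [AddCommMonoid M] [Module k M]
variable {k}

lemma finsupp_sum_delta {α : Type*} [DecidableEq α] (f : α →₀ k) (a : α) :
    (f.sum fun x v => if x = a then v else 0) = f a := by
  rw [Finsupp.sum_ite_eq']
  split_ifs with h
  · rfl
  · exact (Finsupp.notMem_support_iff.mp h).symm

lemma prim_apply_e
    (hcounitl : ∀ s, ((diag s).sum fun p c =>
        if p.1 = e then Finsupp.single p.2 c else 0) = Finsupp.single s 1)
    {x : S →₀ k} (hx : IsPrimitive k e diag x) : x e = 0 := by
  have hdse : ∀ s : S, (diag s) (e, e) = if s = e then 1 else 0 := by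
    intro s
    have h := congrArg (fun F : S →₀ k => F e) (hcounitl s)
    simp only [Finsupp.sum_apply, apply_ite (fun F : S →₀ k => F e), Finsupp.single_apply,
      Finsupp.zero_apply] at h
    rw [← finsupp_sum_delta (diag s) (e, e), ← h]
    refine Finsupp.sum_congr fun p _ => ?_
    by_cases h1 : p.1 = e <;> by_cases h2 : p.2 = e <;>
      simp [Prod.ext_iff, h1, h2]
  have h1 : (diagK k diag x) (e, e) = x e := by
    rw [show diagK k diag x = x.sum fun s c => c • diag s from rfl, Finsupp.sum_apply,
      ← finsupp_sum_delta x e]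
    refine Finsupp.sum_congr fun s _ => ?_
    rw [Finsupp.smul_apply, hdse s, smul_eq_mul]
    split_ifs <;> simp
  have h2 : (pairT k x (Finsupp.single e 1)) (e, e) = x e := by
    rw [show pairT k x (Finsupp.single e 1) = x.sum fun s c =>
        (Finsupp.single e (1:k)).sum fun t c' => (c * c') • Finsupp.single (s, t) 1 from rfl,
      Finsupp.sum_apply, ← finsupp_sum_delta x e]
    refine Finsupp.sum_congr fun s _ => ?_
    rw [Finsupp.sum_apply, Finsupp.sum_single_index (by simp)]
    by_cases h : s = e <;> simp [h, Finsupp.single_apply, Prod.ext_iff]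
  have h3 : (pairT k (Finsupp.single e 1) x) (e, e) = x e := by
    rw [show pairT k (Finsupp.single e 1) x = (Finsupp.single e (1:k)).sum fun s c =>
        x.sum fun t c' => (c * c') • Finsupp.single (s, t) 1 from rfl,
      Finsupp.sum_single_index (by simp), Finsupp.sum_apply, ← finsupp_sum_delta x e]
    refine Finsupp.sum_congr fun t _ => ?_
    by_cases h : t = e <;> simp [h, Finsupp.single_apply, Prod.ext_iff]
  have h4 := congrArg (fun F : (S × S) →₀ k => F (e, e)) hx
  simp only [Finsupp.add_apply, h1, h2, h3] at h4
  exact add_eq_left.mp h4.symm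

lemma toBarL_cons {s : S} (h : s ≠ e) (l : List S) :
    toBarL e (s :: l) = ⟨s, h⟩ :: toBarL e l := by
  simp [toBarL, h]

lemma toBarL_length {l : List S} (h : ∀ s ∈ l, s ≠ e) : (toBarL e l).length = l.length := by
  induction l with
  | nil => rfl
  | cons s l ih =>
    rw [toBarL_cons e (h s (by simp)), List.length_cons, List.length_cons,
      ih fun t ht => h t (by simp [ht])]

lemma mulK_single_single (s t : S) :
    mulK k mul (Finsupp.single s 1) (Finsupp.single t 1) = mul s t := by
  rw [show mulK k mul (Finsupp.single s 1) (Finsupp.single t 1)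
      = (Finsupp.single s (1:k)).sum fun s' c =>
          (Finsupp.single t (1:k)).sum fun t' c' => (c * c') • mul s' t' from rfl,
    Finsupp.sum_single_index (by simp), Finsupp.sum_single_index (by simp)]
  simp

lemma listProdK_unit (hunitl : ∀ s, mul e s = Finsupp.single s 1) {β : Type*} (l : List β) :
    listProdK k e mul (l.map fun _ => e) = Finsupp.single e 1 := by
  induction l with
  | nil => rfl
  | cons x l ih =>
    rw [List.map_cons, show listProdK k e mul (e :: l.map fun _ => e)
        = mulK k mul (Finsupp.single e 1) (listProdK k e mul (l.map fun _ => e)) from rfl, ih,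
      mulK_single_single, hunitl]

lemma bsum_expandL_congr₂ (ps : List (S →₀ k)) {Φ Φ' : List S → M}
    (h : ∀ l, List.Forall₂ (fun p s => s ∈ p.support) ps l → Φ l = Φ' l) :
    bsum k (expandL k ps) Φ = bsum k (expandL k ps) Φ' := by
  induction ps generalizing Φ Φ' with
  | nil => rw [bsum_expandL_nil, bsum_expandL_nil]; exact h [] List.Forall₂.nil
  | cons p rest ih =>
    rw [bsum_expandL_cons, bsum_expandL_cons]
    refine bsum_congr fun s hs => ?_
    exact ih fun l hl => h (s :: l) (List.Forall₂.cons hs hl)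

lemma forall₂_ne {ps : List (S →₀ k)} {l : List S} (hp : ∀ p ∈ ps, p e = 0)
    (hl : List.Forall₂ (fun p s => s ∈ p.support) ps l) : ∀ s ∈ l, s ≠ e := by
  induction hl with
  | nil => simp
  | @cons p s ps' l' hmem _ ih =>
    intro t ht
    rcases List.mem_cons.mp ht with rfl | ht
    · intro he
      exact (Finsupp.mem_support_iff.mp hmem) (he ▸ hp p (by simp))
    · exact ih (fun q hq => hp q (by simp [hq])) t ht

lemma forall₂_deg {qs : List (ℤ × (S →₀ k))} {l : List S}
    (hq : ∀ p ∈ qs, IsHomog k deg p.1 p.2)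
    (hl : List.Forall₂ (fun p s => s ∈ p.support) (qs.map Prod.snd) l) :
    l.map deg = qs.map Prod.fst := by
  induction qs generalizing l with
  | nil => cases hl; rfl
  | cons q qs' ih =>
    rw [List.map_cons] at hl
    cases hl with
    | cons hmem hl' =>
      rw [List.map_cons, List.map_cons, ih (fun p hp => hq p (by simp [hp])) hl',
        (hq q (by simp)) _ hmem]

end basicfacts
section mainlemmas
variable {M : Type*} [AddCommMonoid M] [Module k M]
variable {k}

lemma bsum_choose (ps : List (S →₀ k)) (hp : ∀ p ∈ ps, p e = 0) (Φ : List (S × S) → M) :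
    bsum k (expandL k ps) (fun l => bsum k (chooseAll k e diag (toBarL e l)) Φ)
      = bsum k (expandP k (ps.map (diagK k diag))) Φ := by
  induction ps generalizing Φ with
  | nil =>
    rw [bsum_expandL_nil, List.map_nil, bsum_expandP_nil,
      show toBarL e ([] : List S) = [] from rfl, bsum_chooseAll_nil]
  | cons p rest ih =>
    rw [bsum_expandL_cons, List.map_cons, bsum_expandP_cons, bsum_diagK]
    refine bsum_congr fun s hs => ?_
    have hse : s ≠ e := fun h => (Finsupp.mem_support_iff.mp hs) (h ▸ hp p (by simp))
    calc bsum k (expandL k rest) (fun l => bsum k (chooseAll k e diag (toBarL e (s :: l))) Φ)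
        = bsum k (expandL k rest) (fun l => bsum k (diag s)
            (fun pr => bsum k (chooseAll k e diag (toBarL e l)) (fun cl => Φ (pr :: cl)))) := by
          refine congrArg _ (funext fun l => ?_)
          rw [toBarL_cons e hse, bsum_chooseAll_cons]
      _ = bsum k (diag s) (fun pr => bsum k (expandL k rest)
            (fun l => bsum k (chooseAll k e diag (toBarL e l)) (fun cl => Φ (pr :: cl)))) :=
          bsum_comm _ _
      _ = bsum k (diag s) (fun pr => bsum k (expandP k (rest.map (diagK k diag)))
            (fun cl => Φ (pr :: cl))) :=
          congrArg _ (funext fun pr => ih (fun q hq => hp q (by simp [hq])) _)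

lemma bsum_filter (i : ℕ) (ps : List (S →₀ k))
    (hp : ∀ p ∈ ps, IsPrimitive k e diag p)
    (Ψ : List (S × S) → M)
    (hΨ : ∀ cl, ¬((∀ s ∈ (List.take i cl).map Prod.fst, s ≠ e) ∧
        (∀ s ∈ (List.drop i cl).map Prod.snd, s ≠ e)) → Ψ cl = 0) :
    bsum k (expandP k (ps.map (diagK k diag))) Ψ
      = bsum k (expandL k (ps.take i))
          (fun l₁ => bsum k (expandL k (ps.drop i))
            (fun l₂ => Ψ (l₁.map (·, e) ++ l₂.map (e, ·)))) := by
  induction i generalizing ps Ψ with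
  | zero =>
    rw [List.take_zero, List.drop_zero, bsum_expandL_nil]
    induction ps generalizing Ψ with
    | nil => rw [List.map_nil, bsum_expandP_nil, bsum_expandL_nil]; simp
    | cons p rest ih2 =>
      have hpe : diagK k diag p
          = pairT k p (Finsupp.single e 1) + pairT k (Finsupp.single e 1) p := hp p (by simp)
      rw [List.map_cons, bsum_expandP_cons, bsum_expandL_cons, hpe, bsum_add, bsum_pairT,
        bsum_pairT]
      have hz : bsum k p (fun s => bsum k (Finsupp.single e (1:k))
          (fun t => bsum k (expandP k (rest.map (diagK k diag)))
            (fun l => Ψ ((s, t) :: l)))) = 0 :=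
        bsum_eq_zero fun s => by
          simp only [bsum_single, one_smul]
          exact bsum_eq_zero fun l => hΨ _ fun ⟨_, hB⟩ => hB e (by simp) rfl
      rw [hz, zero_add]
      simp only [bsum_single, one_smul]
      refine bsum_congr fun t _ => ?_
      rw [ih2 (fun q hq => hp q (by simp [hq])) (fun l => Ψ ((e, t) :: l))
        (fun cl hcl => hΨ _ fun ⟨hA, hB⟩ => hcl ⟨by simp, fun s hs => hB s (by
          simp only [List.drop_zero, List.map_cons, List.mem_cons] at hs ⊢
          exact Or.inr hs)⟩)]
      exact congrArg _ (funext fun l => by simp)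
  | succ i ih =>
    cases ps with
    | nil =>
      rw [List.map_nil, List.take_nil, List.drop_nil, bsum_expandP_nil, bsum_expandL_nil,
        bsum_expandL_nil]
      simp
    | cons p rest =>
      have hpe : diagK k diag p
          = pairT k p (Finsupp.single e 1) + pairT k (Finsupp.single e 1) p := hp p (by simp)
      rw [List.map_cons, bsum_expandP_cons, List.take_succ_cons, List.drop_succ_cons,
        bsum_expandL_cons, hpe, bsum_add, bsum_pairT, bsum_pairT]
      have hz : bsum k (Finsupp.single e (1:k)) (fun s => bsum k p (fun t =>
          bsum k (expandP k (rest.map (diagK k diag))) (fun l => Ψ ((s, t) :: l)))) = 0 := by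
        simp only [bsum_single, one_smul]
        exact bsum_eq_zero fun t => bsum_eq_zero fun l =>
          hΨ _ fun ⟨hA, _⟩ => hA e (by simp [List.take_succ_cons]) rfl
      rw [hz, add_zero]
      refine bsum_congr fun s _ => ?_
      simp only [bsum_single, one_smul]
      rw [ih rest (fun q hq => hp q (by simp [hq])) (fun l => Ψ ((s, e) :: l)) (fun cl hcl =>
        hΨ _ fun ⟨hA, hB⟩ => hcl ⟨fun x hx => hA x (by
            simp only [List.take_succ_cons, List.map_cons]
            exact List.mem_cons_of_mem _ hx),
          fun x hx => hB x (by simpa [List.drop_succ_cons] using hx)⟩)]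
      exact congrArg _ (funext fun l₁ => congrArg _ (funext fun l₂ => by simp))

end mainlemmas
section zetasec

lemma getD_replicate_zero (n j : ℕ) : (List.replicate n (0:ℤ)).getD j 0 = 0 := by
  induction n generalizing j with
  | zero => rfl
  | succ n ih =>
    cases j with
    | zero => rfl
    | succ j => rw [List.replicate_succ, List.getD_cons_succ, ih]

lemma sum_getD (l : List ℤ) : ∑ j ∈ Finset.range l.length, l.getD j 0 = l.sum := by
  induction l with
  | nil => simp
  | cons x l ih =>
    rw [List.length_cons, Finset.sum_range_succ', List.sum_cons]
    simp only [List.getD_cons_succ, List.getD_cons_zero]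
    rw [ih, add_comm]

lemma sum_map_add_one (l : List ℤ) : (l.map (· + 1)).sum = l.sum + l.length := by
  induction l with
  | nil => simp
  | cons x l ih =>
    simp only [List.map_cons, List.sum_cons, ih, List.length_cons]
    push_cast
    ring

lemma zeta_eval (q m : ℤ) (d₁ d₂ : List ℤ) :
    zeta q m (d₁ ++ List.replicate d₂.length 0) (List.replicate d₁.length 0 ++ d₂) d₁.length
      = q * (d₁.map (· + 1)).sum + (d₂.map (· + 1)).sum * m + q * m := by
  simp only [zeta]
  have hlen : (d₁ ++ List.replicate d₂.length (0:ℤ)).length = d₁.length + d₂.length := by simp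
  rw [hlen]
  have h1 : ∑ j ∈ Finset.range (d₁.length + d₂.length),
      (q + ((List.replicate d₁.length (0:ℤ) ++ d₂).take j).sum)
        * (d₁ ++ List.replicate d₂.length (0:ℤ)).getD j 0 = q * d₁.sum := by
    rw [Finset.sum_range_add]
    have h2nd : (∑ x ∈ Finset.range d₂.length,
        (q + ((List.replicate d₁.length (0:ℤ) ++ d₂).take (d₁.length + x)).sum)
          * (d₁ ++ List.replicate d₂.length (0:ℤ)).getD (d₁.length + x) 0) = 0 :=
      Finset.sum_eq_zero fun x _ => by
        rw [List.getD_append_right _ _ _ _ (by omega), getD_replicate_zero, mul_zero]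
    rw [h2nd, add_zero]
    calc ∑ j ∈ Finset.range d₁.length,
        (q + ((List.replicate d₁.length (0:ℤ) ++ d₂).take j).sum)
          * (d₁ ++ List.replicate d₂.length (0:ℤ)).getD j 0
        = ∑ j ∈ Finset.range d₁.length, q * d₁.getD j 0 := by
          refine Finset.sum_congr rfl fun j hj => ?_
          have hj' := Finset.mem_range.mp hj
          rw [List.take_append_of_le_length (by simpa using Nat.le_of_lt hj'),
            List.take_replicate, List.sum_replicate, smul_zero, add_zero,
            List.getD_append _ _ _ _ hj']
      _ = q * d₁.sum := by rw [← Finset.mul_sum, sum_getD]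
  have h3 : ∑ j ∈ Finset.range (d₁.length + d₂.length),
      (if d₁.length ≤ j then ((j:ℤ) + 1 - (d₁.length : ℤ))
        * (d₁ ++ List.replicate d₂.length (0:ℤ)).getD j 0 else 0) = 0 :=
    Finset.sum_eq_zero fun j _ => by
      by_cases h : d₁.length ≤ j
      · rw [if_pos h, List.getD_append_right _ _ _ _ h, getD_replicate_zero, mul_zero]
      · rw [if_neg h]
  have h6 : ∑ j ∈ Finset.range (d₁.length + d₂.length),
      (if j + 1 < d₁.length then ((d₁.length : ℤ) - ((j:ℤ) + 1))
        * (List.replicate d₁.length (0:ℤ) ++ d₂).getD j 0 else 0) = 0 :=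
    Finset.sum_eq_zero fun j _ => by
      by_cases h : j + 1 < d₁.length
      · rw [if_pos h, List.getD_append _ _ _ _ (by simpa using Nat.lt_of_succ_lt h),
          getD_replicate_zero, mul_zero]
      · rw [if_neg h]
  have hBsum : (List.replicate d₁.length (0:ℤ) ++ d₂).sum = d₂.sum := by simp
  rw [h1, h3, h6, hBsum, sum_map_add_one, sum_map_add_one]
  push_cast
  ring

end zetasec
section normalforms
variable {M : Type*} [AddCommMonoid M] [Module k M]
variable {k}

lemma bsum_bsum_eq {α β : Type*} (F : α →₀ k) (G : β →₀ k) (h : α → β → M) :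
    (F.sum fun x c => G.sum fun y c' => (c * c') • h x y)
      = bsum k F (fun x => bsum k G (h x)) := by
  refine Finsupp.sum_congr fun x _ => ?_
  refine Eq.trans ?_ Finsupp.smul_sum.symm
  exact Finsupp.sum_congr fun y _ => by rw [mul_smul]

lemma pairBar_eq_bsum (f g : BarGen e →₀ k) :
    pairBar k e f g = bsum k f (fun u => bsum k g (fun v => Finsupp.single (u, v) 1)) :=
  bsum_bsum_eq f g fun u v => Finsupp.single (u, v) 1

lemma diagBar_eq (a : S) (L : List (SBar e)) (b : S) :
    diagBar k deg e mul diag (a, L, b)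
      = bsum k (diag a) (fun pa => bsum k (diag b) (fun pb =>
          bsum k (chooseAll k e diag L) (fun cl =>
            ∑ i ∈ Finset.range (L.length + 1),
              if (∀ s ∈ (cl.take i).map Prod.fst, s ≠ e) ∧
                  (∀ s ∈ (cl.drop i).map Prod.snd, s ≠ e) then
                ((sgn (zeta (deg pa.2) (deg pb.1) (cl.map fun p => deg p.1)
                    (cl.map fun p => deg p.2) i) : ℤ) : k) •
                  bsum k (mulK k mul (listProdK k e mul ((cl.drop i).map Prod.fst))
                      (Finsupp.single pb.1 1)) (fun sL =>
                    bsum k (mulK k mul (Finsupp.single pa.2 1)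
                        (listProdK k e mul ((cl.take i).map Prod.snd))) (fun sR =>
                      Finsupp.single ((pa.1, toBarL e ((cl.take i).map Prod.fst), sL),
                        (sR, toBarL e ((cl.drop i).map Prod.snd), pb.2)) 1))
              else 0))) := by
  simp only [diagBar, bsum, Finsupp.smul_sum, Finset.smul_sum, smul_ite, smul_zero, smul_smul]
  refine Finsupp.sum_congr fun pa _ => Finsupp.sum_congr fun pb _ =>
    Finsupp.sum_congr fun cl _ => Finset.sum_congr rfl fun i _ => ?_
  split_ifs with h
  · refine Finsupp.sum_congr fun sL _ => Finsupp.sum_congr fun sR _ => ?_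
    congr 1
    ring
  · rfl

lemma diagTens_eq (a : S) (ps : List (ℤ × (S →₀ k))) (b : S) :
    diagTens k deg e diag a ps b
      = bsum k (diag a) (fun pa => bsum k (diag b) (fun pb =>
          ∑ i ∈ Finset.range (ps.length + 1),
            ((sgn (deg pa.2 * ((ps.take i).map fun p => p.1 + 1).sum
                + (((ps.drop i).map fun p => p.1 + 1).sum) * deg pb.1
                + deg pa.2 * deg pb.1) : ℤ) : k) •
              pairBar k e (jMap k e pa.1 ((ps.take i).map Prod.snd) pb.1)
                (jMap k e pa.2 ((ps.drop i).map Prod.snd) pb.2))) := by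
  simp only [diagTens, bsum, Finsupp.smul_sum, Finset.smul_sum, smul_smul]
  refine Finsupp.sum_congr fun pa _ => Finsupp.sum_congr fun pb _ =>
    Finset.sum_congr rfl fun i _ => ?_
  congr 1
  ring

end normalforms
section coreeval
variable {k}

lemma core_eval
    (hdege : deg e = 0) (hunitl : ∀ s, mul e s = Finsupp.single s 1)
    (hunitr : ∀ s, mul s e = Finsupp.single s 1)
    (ps : List (ℤ × (S →₀ k))) (i : ℕ) (hi : i ≤ ps.length)
    (pa pb : S × S) (l₁ l₂ : List S)
    (h1 : ∀ s ∈ l₁, s ≠ e) (h2 : ∀ s ∈ l₂, s ≠ e)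
    (hd₁ : l₁.map deg = (ps.take i).map Prod.fst)
    (hd₂ : l₂.map deg = (ps.drop i).map Prod.fst) :
    (if (∀ s ∈ ((l₁.map (fun x => (x, e)) ++ l₂.map (fun x => (e, x))).take i).map Prod.fst,
          s ≠ e) ∧
        (∀ s ∈ ((l₁.map (fun x => (x, e)) ++ l₂.map (fun x => (e, x))).drop i).map Prod.snd,
          s ≠ e) then
      ((sgn (zeta (deg pa.2) (deg pb.1)
          ((l₁.map (fun x => (x, e)) ++ l₂.map (fun x => (e, x))).map fun p => deg p.1)
          ((l₁.map (fun x => (x, e)) ++ l₂.map (fun x => (e, x))).map fun p => deg p.2) i) : ℤ)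
        : k) •
        bsum k (mulK k mul (listProdK k e mul
            (((l₁.map (fun x => (x, e)) ++ l₂.map (fun x => (e, x))).drop i).map Prod.fst))
            (Finsupp.single pb.1 1)) (fun sL =>
          bsum k (mulK k mul (Finsupp.single pa.2 1)
              (listProdK k e mul
                (((l₁.map (fun x => (x, e)) ++ l₂.map (fun x => (e, x))).take i).map Prod.snd)))
            (fun sR =>
              Finsupp.single
                ((pa.1, toBarL e
                    (((l₁.map (fun x => (x, e)) ++ l₂.map (fun x => (e, x))).take i).map
                      Prod.fst), sL),
                  (sR, toBarL e
                    (((l₁.map (fun x => (x, e)) ++ l₂.map (fun x => (e, x))).drop i).map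
                      Prod.snd), pb.2)) 1))
    else 0)
    = ((sgn (deg pa.2 * ((ps.take i).map fun p => p.1 + 1).sum
        + (((ps.drop i).map fun p => p.1 + 1).sum) * deg pb.1 + deg pa.2 * deg pb.1) : ℤ) : k) •
      Finsupp.single ((pa.1, toBarL e l₁, pb.1), (pa.2, toBarL e l₂, pb.2)) (1:k) := by
  have hlen1 : l₁.length = i := by
    have h := congrArg List.length hd₁
    simp only [List.length_map, List.length_take] at h
    omega
  have hlen1' : l₁.length
      = ((ps.take i).map (Prod.fst : ℤ × (S →₀ k) → ℤ)).length := by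
    simpa using congrArg List.length hd₁
  have hlen2 : l₂.length
      = ((ps.drop i).map (Prod.fst : ℤ × (S →₀ k) → ℤ)).length := by
    simpa using congrArg List.length hd₂
  have htake : (l₁.map (fun x => (x, e)) ++ l₂.map (fun x => (e, x))).take i
      = l₁.map (fun x => (x, e)) := by
    rw [show i = (l₁.map (fun x => (x, e))).length from by simp [hlen1], List.take_left]
  have hdrop : (l₁.map (fun x => (x, e)) ++ l₂.map (fun x => (e, x))).drop i
      = l₂.map (fun x => (e, x)) := by
    rw [show i = (l₁.map (fun x => (x, e))).length from by simp [hlen1], List.drop_left]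
  have eA1 : l₂.map ((fun p : S × S => deg p.1) ∘ (fun x => (e, x)))
      = l₂.map (fun _ => (0 : ℤ)) := List.map_congr_left fun x _ => hdege
  have hA : ((l₁.map (fun x => (x, e)) ++ l₂.map (fun x => (e, x))).map fun p => deg p.1)
      = ((ps.take i).map Prod.fst)
        ++ List.replicate ((ps.drop i).map (Prod.fst : ℤ × (S →₀ k) → ℤ)).length 0 := by
    rw [List.map_append, List.map_map, List.map_map, eA1, List.map_const', hlen2,
      show l₁.map ((fun p : S × S => deg p.1) ∘ (fun x => (x, e))) = l₁.map deg from rfl, hd₁]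
  have hB : ((l₁.map (fun x => (x, e)) ++ l₂.map (fun x => (e, x))).map fun p => deg p.2)
      = List.replicate ((ps.take i).map (Prod.fst : ℤ × (S →₀ k) → ℤ)).length 0
        ++ ((ps.drop i).map Prod.fst) := by
    have eB1 : l₁.map ((fun p : S × S => deg p.2) ∘ (fun x => (x, e)))
        = l₁.map (fun _ => (0 : ℤ)) := List.map_congr_left fun x _ => hdege
    rw [List.map_append, List.map_map, List.map_map, eB1, List.map_const', hlen1',
      show l₂.map ((fun p : S × S => deg p.2) ∘ (fun x => (e, x))) = l₂.map deg from rfl, hd₂]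
  have hzeq : zeta (deg pa.2) (deg pb.1)
      ((l₁.map (fun x => (x, e)) ++ l₂.map (fun x => (e, x))).map fun p => deg p.1)
      ((l₁.map (fun x => (x, e)) ++ l₂.map (fun x => (e, x))).map fun p => deg p.2) i
      = deg pa.2 * ((ps.take i).map fun p => p.1 + 1).sum
        + (((ps.drop i).map fun p => p.1 + 1).sum) * deg pb.1 + deg pa.2 * deg pb.1 := by
    rw [hA, hB]
    have hmap1 : (((ps.take i).map (Prod.fst : ℤ × (S →₀ k) → ℤ)).map (· + 1))
        = (ps.take i).map fun p => p.1 + 1 := by rw [List.map_map]; rfl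
    have hmap2 : (((ps.drop i).map (Prod.fst : ℤ × (S →₀ k) → ℤ)).map (· + 1))
        = (ps.drop i).map fun p => p.1 + 1 := by rw [List.map_map]; rfl
    have := zeta_eval (deg pa.2) (deg pb.1) ((ps.take i).map Prod.fst)
      ((ps.drop i).map Prod.fst)
    rw [hmap1, hmap2] at this
    have hieq : i = ((ps.take i).map (Prod.fst : ℤ × (S →₀ k) → ℤ)).length := by
      rw [← hlen1']; exact hlen1.symm
    exact (congrArg (zeta (deg pa.2) (deg pb.1) _ _) hieq).trans this
  rw [htake, hdrop]
  have hm1 : (l₁.map (fun x => (x, e))).map Prod.fst = l₁ := by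
    rw [List.map_map]
    exact (List.map_congr_left fun x _ => rfl).trans (List.map_id _)
  have hm2 : (l₁.map (fun x => (x, e))).map Prod.snd = l₁.map (fun _ => e) := by
    rw [List.map_map]
    exact List.map_congr_left fun x _ => rfl
  have hm3 : (l₂.map (fun x => (e, x))).map Prod.fst = l₂.map (fun _ => e) := by
    rw [List.map_map]
    exact List.map_congr_left fun x _ => rfl
  have hm4 : (l₂.map (fun x => (e, x))).map Prod.snd = l₂ := by
    rw [List.map_map]
    exact (List.map_congr_left fun x _ => rfl).trans (List.map_id _)
  rw [hm1, hm2, hm3, hm4, if_pos ⟨h1, h2⟩, hzeq, listProdK_unit e mul hunitl l₂,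
    listProdK_unit e mul hunitl l₁, mulK_single_single, mulK_single_single, hunitl, hunitr]
  simp only [bsum_single, one_smul]
end coreeval
theorem bar_diagonal_on_primitives
    -- grading of the structure constants
    (hmuldeg : ∀ s t u, u ∈ (mul s t).support → deg u = deg s + deg t)
    (hdiagdeg : ∀ s p, p ∈ (diag s).support → deg p.1 + deg p.2 = deg s)
    (hdege : deg e = 0)
    -- `e` is the unit and `ε` the counit
    (hunitl : ∀ s, mul e s = Finsupp.single s 1)
    (hunitr : ∀ s, mul s e = Finsupp.single s 1)
    (hcounitl : ∀ s, ((diag s).sum fun p c =>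
        if p.1 = e then Finsupp.single p.2 c else 0) = Finsupp.single s 1)
    (hcounitr : ∀ s, ((diag s).sum fun p c =>
        if p.2 = e then Finsupp.single p.1 c else 0) = Finsupp.single s 1) :
    -- on `K ⊗ TC(sP) ⊗ K` (middle slots homogeneous primitive elements), the
    -- Alexander–Whitney diagonal of the bar resolution agrees with the
    -- tensorized diagonal: the canonical map is a morphism of graded
    -- coalgebras
    ∀ (a b : S) (ps : List (ℤ × (S →₀ k))),
      (∀ p ∈ ps, IsPrimitive k e diag p.2 ∧ IsHomog k deg p.1 p.2) →
      ((jMap k e a (ps.map Prod.snd) b).sum fun g c =>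
          c • diagBar k deg e mul diag g)
        = diagTens k deg e diag a ps b := by
  intro a b ps hps
  have hprims : ∀ p ∈ ps.map Prod.snd, IsPrimitive k e diag p := by
    intro p hp
    obtain ⟨q, hq, rfl⟩ := List.mem_map.mp hp
    exact (hps q hq).1
  have hpe : ∀ p ∈ ps.map Prod.snd, p e = 0 :=
    fun p hp => prim_apply_e e diag hcounitl (hprims p hp)
  rw [diagTens_eq]
  show bsum k (jMap k e a (ps.map Prod.snd) b) (fun g => diagBar k deg e mul diag g) = _
  rw [bsum_jMap]
  trans (bsum k (expandL k (ps.map Prod.snd)) (fun l =>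
    bsum k (diag a) (fun pa => bsum k (diag b) (fun pb =>
      bsum k (chooseAll k e diag (toBarL e l)) (fun cl =>
        ∑ i ∈ Finset.range (ps.length + 1),
          if (∀ s ∈ (cl.take i).map Prod.fst, s ≠ e) ∧
              (∀ s ∈ (cl.drop i).map Prod.snd, s ≠ e) then
            ((sgn (zeta (deg pa.2) (deg pb.1) (cl.map fun p => deg p.1)
                (cl.map fun p => deg p.2) i) : ℤ) : k) •
              bsum k (mulK k mul (listProdK k e mul ((cl.drop i).map Prod.fst))
                  (Finsupp.single pb.1 1)) (fun sL =>
                bsum k (mulK k mul (Finsupp.single pa.2 1)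
                    (listProdK k e mul ((cl.take i).map Prod.snd))) (fun sR =>
                  Finsupp.single ((pa.1, toBarL e ((cl.take i).map Prod.fst), sL),
                    (sR, toBarL e ((cl.drop i).map Prod.snd), pb.2)) (1:k)))
          else 0)))))
  · refine bsum_expandL_congr₂ _ fun l hl => ?_
    have h1 : ∀ s ∈ l, s ≠ e := forall₂_ne e hpe hl
    have hlen : (toBarL e l).length = ps.length := by
      rw [toBarL_length e h1, ← List.Forall₂.length_eq hl, List.length_map]
    rw [if_pos h1, diagBar_eq, hlen]
  refine Eq.trans (bsum_comm _ _) ?_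
  refine congrArg _ (funext fun pa => ?_)
  refine Eq.trans (bsum_comm _ _) ?_
  refine congrArg _ (funext fun pb => ?_)
  rw [bsum_choose e diag _ hpe, bsum_sum]
  refine Finset.sum_congr rfl fun i hi => ?_
  have hi' : i ≤ ps.length := Nat.lt_succ_iff.mp (Finset.mem_range.mp hi)
  have hsub₁ : ∀ p ∈ (ps.take i).map Prod.snd, p e = 0 := fun p hp => hpe p (by
    rw [List.map_take] at hp
    exact List.take_subset _ _ hp)
  have hsub₂ : ∀ p ∈ (ps.drop i).map Prod.snd, p e = 0 := fun p hp => hpe p (by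
    rw [List.map_drop] at hp
    exact List.drop_subset _ _ hp)
  have hpair : pairBar k e (jMap k e pa.1 ((ps.take i).map Prod.snd) pb.1)
      (jMap k e pa.2 ((ps.drop i).map Prod.snd) pb.2)
      = bsum k (expandL k ((ps.take i).map Prod.snd)) (fun l₁ =>
          bsum k (expandL k ((ps.drop i).map Prod.snd)) (fun l₂ =>
            Finsupp.single ((pa.1, toBarL e l₁, pb.1),
              (pa.2, toBarL e l₂, pb.2)) (1:k))) := by
    rw [pairBar_eq_bsum, bsum_jMap]
    refine bsum_expandL_congr₂ _ fun l₁ hl₁ => ?_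
    rw [if_pos (forall₂_ne e hsub₁ hl₁), bsum_jMap]
    exact bsum_expandL_congr₂ _ fun l₂ hl₂ => if_pos (forall₂_ne e hsub₂ hl₂)
  refine Eq.trans (bsum_filter e diag i _ hprims _ fun cl hcl => if_neg hcl) ?_
  rw [← List.map_take, ← List.map_drop]
  refine Eq.trans (bsum_expandL_congr₂ (Φ' := fun l₁ =>
      bsum k (expandL k ((ps.drop i).map Prod.snd)) (fun l₂ =>
        ((sgn (deg pa.2 * ((ps.take i).map fun p => p.1 + 1).sum
            + (((ps.drop i).map fun p => p.1 + 1).sum) * deg pb.1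
            + deg pa.2 * deg pb.1) : ℤ) : k) •
          Finsupp.single ((pa.1, toBarL e l₁, pb.1),
            (pa.2, toBarL e l₂, pb.2)) (1:k)))
      _ fun l₁ hl₁ => ?_) ?_
  · refine bsum_expandL_congr₂ _ fun l₂ hl₂ => ?_
    have h1 := forall₂_ne e hsub₁ hl₁
    have h2 := forall₂_ne e hsub₂ hl₂
    have hd₁ := forall₂_deg deg (fun q hq => (hps q (List.take_subset _ _ hq)).2) hl₁
    have hd₂ := forall₂_deg deg (fun q hq => (hps q (List.drop_subset _ _ hq)).2) hl₂
    exact core_eval deg e mul hdege hunitl hunitr ps i hi' pa pb l₁ l₂ h1 h2 hd₁ hd₂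
  · refine Eq.trans (congrArg _ (funext fun l₁ => bsum_smul_fun _)) ?_
    refine Eq.trans (bsum_smul_fun _) ?_
    exact congrArg _ hpair.symm
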